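/- Lower bound for down-steps with k queues: for any list of distinct integers, and any partition of it into k subsequences (queues), the total number of down-steps across all k subsequences is at least d, where d is the number of positions j in the input at which a strictly decreasing subsequence of length k+1 ends when scanning greedily (equivalently, d is the number of down-steps incurred by the greedy cyclic algorithm Alg_DS). In particular, no assignment of elements to k queues produces fewer total down-steps in the queues than Alg_DS. -/

import Mathlib

def downSteps (a : List ℤ) : ℕ :=
  (a.zip a.tail).countP (fun p => decide (p.1 > p.2))

inductive KInterleave : {k : ℕ} → (Fin k → List ℤ) → List ℤ → Prop
  | nil {k : ℕ} : KInterleave (fun _ : Fin k => []) []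
  | cons {k : ℕ} (i : Fin k) (x : ℤ) {qs : Fin k → List ℤ} {C : List ℤ} :
      KInterleave qs C → KInterleave (Function.update qs i (x :: qs i)) (x :: C)

/-- The number of down-steps incurred by the greedy algorithm `Alg_DS` with `k+1`
queues when enqueuing the given list, starting from last elements `ℓ` and base `b`:
append `e` to the queue at the minimal cyclic offset from `b` whose last element is
below `e`; if none exists, append to the base queue (a down-step) and advance the base. -/
def algDS (k : ℕ) : List ℤ → (Fin (k + 1) → ℤ) → Fin (k + 1) → ℕ
  | [], _, _ => 0
  | e :: rest, ℓ, b =>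
    let S := Finset.univ.filter (fun i : Fin (k + 1) => e > ℓ (b + i))
    if h : S.Nonempty then
      algDS k rest (Function.update ℓ (b + S.min' h) e) b
    else
      1 + algDS k rest (Function.update ℓ b e) (b + 1)

lemma downSteps_nil : downSteps [] = 0 := rfl
lemma downSteps_single (u : ℤ) : downSteps [u] = 0 := rfl

lemma downSteps_cons_cons (u v : ℤ) (l : List ℤ) :
    downSteps (u :: v :: l) = (if v < u then 1 else 0) + downSteps (v :: l) := by
  simp [downSteps, List.countP_cons]
  split <;> omega

def cntLE (s : Finset ℤ) (v : ℤ) : ℕ := (s.filter (fun t => t ≤ v)).card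

def phi (g a : Finset ℤ) : ℕ := (g ∪ a).sup (fun v => cntLE a v - cntLE g v)

lemma phi_self (g : Finset ℤ) : phi g g = 0 := by
  apply Nat.le_antisymm _ (Nat.zero_le _)
  exact Finset.sup_le fun v _ => by omega


lemma cntLE_mono (s : Finset ℤ) {v w : ℤ} (h : v ≤ w) : cntLE s v ≤ cntLE s w := by
  apply Finset.card_le_card
  intro t ht
  rw [Finset.mem_filter] at ht ⊢
  exact ⟨ht.1, le_trans ht.2 h⟩

lemma cntLE_le_card (s : Finset ℤ) (v : ℤ) : cntLE s v ≤ s.card :=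
  Finset.card_filter_le _ _

lemma le_phi (g a : Finset ℤ) (v : ℤ) :
    (cntLE a v : ℤ) - cntLE g v ≤ phi g a := by
  rcases (a.filter (fun t => t ≤ v)).eq_empty_or_nonempty with he | hne
  · have h0 : cntLE a v = 0 := by simp [cntLE, he]
    have : (0:ℤ) ≤ (phi g a : ℤ) := Int.natCast_nonneg _
    omega
  · set w := (a.filter (fun t => t ≤ v)).max' hne with hw
    have hwmem := Finset.max'_mem _ hne
    rw [Finset.mem_filter] at hwmem
    have hav : cntLE a v = cntLE a w := by
      apply le_antisymm
      · apply Finset.card_le_card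
        intro t ht
        rw [Finset.mem_filter] at ht ⊢
        exact ⟨ht.1, Finset.le_max' _ t (Finset.mem_filter.2 ht)⟩
      · exact cntLE_mono a hwmem.2
    have hgv : cntLE g w ≤ cntLE g v := cntLE_mono g hwmem.2
    have hsup : cntLE a w - cntLE g w ≤ phi g a :=
      Finset.le_sup (f := fun v => cntLE a v - cntLE g v)
        (Finset.mem_union_right _ hwmem.1)
    omega

lemma phi_le {g a : Finset ℤ} {N : ℕ}
    (H : ∀ v ∈ g ∪ a, (cntLE a v : ℤ) - cntLE g v ≤ N) : phi g a ≤ N :=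
  Finset.sup_le fun v hv => by have := H v hv; omega

lemma cntLE_ie (s : Finset ℤ) (x p v : ℤ) (hx : x ∉ s) (hp : p ∈ s) :
    (cntLE (insert x (s.erase p)) v : ℤ)
      = (cntLE s v : ℤ) + (if x ≤ v then 1 else 0) - (if p ≤ v then 1 else 0) := by
  have hfe : (s.erase p).filter (fun t => t ≤ v) = (s.filter (fun t => t ≤ v)).erase p :=
    Finset.filter_erase _ _ _
  have hxf : x ∉ (s.filter (fun t => t ≤ v)).erase p :=
    fun h => hx (Finset.mem_of_mem_filter x (Finset.mem_of_mem_erase h))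
  unfold cntLE
  rw [Finset.filter_insert]
  by_cases hxv : x ≤ v <;> by_cases hpv : p ≤ v
  · have hpm : p ∈ s.filter (fun t => t ≤ v) := Finset.mem_filter.2 ⟨hp, hpv⟩
    have h1 : 1 ≤ (s.filter (fun t => t ≤ v)).card := Finset.card_pos.2 ⟨p, hpm⟩
    rw [if_pos hxv, hfe, Finset.card_insert_of_notMem hxf,
      Finset.card_erase_of_mem hpm]
    simp only [if_pos hpv]
    push_cast
    omega
  · have hpm : p ∉ s.filter (fun t => t ≤ v) := fun h => hpv (Finset.mem_filter.1 h).2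
    rw [if_pos hxv, hfe, Finset.erase_eq_of_notMem hpm,
      Finset.card_insert_of_notMem (fun h => hx (Finset.mem_of_mem_filter x h))]
    simp only [if_neg hpv]
    push_cast
    omega
  · have hpm : p ∈ s.filter (fun t => t ≤ v) := Finset.mem_filter.2 ⟨hp, hpv⟩
    have h1 : 1 ≤ (s.filter (fun t => t ≤ v)).card := Finset.card_pos.2 ⟨p, hpm⟩
    rw [if_neg hxv, hfe, Finset.card_erase_of_mem hpm]
    simp only [if_neg hxv, if_pos hpv]
    push_cast
    omega
  · have hpm : p ∉ s.filter (fun t => t ≤ v) := fun h => hpv (Finset.mem_filter.1 h).2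
    rw [if_neg hxv, hfe, Finset.erase_eq_of_notMem hpm]
    simp only [if_neg hxv, if_neg hpv]
    push_cast
    omega

lemma cnt_insert_le (a : Finset ℤ) (q v : ℤ) (hq : q ∈ a) (hqv : ¬ q ≤ v) :
    cntLE a v + 1 ≤ cntLE a q := by
  have hqnm : q ∉ a.filter (fun t => t ≤ v) := fun h => hqv (Finset.mem_filter.1 h).2
  have hsub : insert q (a.filter (fun t => t ≤ v)) ⊆ a.filter (fun t => t ≤ q) := by
    intro t ht
    rcases Finset.mem_insert.1 ht with rfl | ht
    · exact Finset.mem_filter.2 ⟨hq, le_refl _⟩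
    · rw [Finset.mem_filter] at ht ⊢
      exact ⟨ht.1, le_trans ht.2 (le_of_not_ge hqv)⟩
  have hcard := Finset.card_le_card hsub
  rwa [Finset.card_insert_of_notMem hqnm] at hcard

lemma stepA (g a : Finset ℤ) (x p q : ℤ) (hxg : x ∉ g) (hxa : x ∉ a)
    (hp : p ∈ g) (hq : q ∈ a) (hpx : p < x) (hmax : ∀ u ∈ g, u < x → u ≤ p) :
    phi (insert x (g.erase p)) (insert x (a.erase q))
      ≤ phi g a + (if x < q then 1 else 0) := by
  apply phi_le
  intro v _
  rw [cntLE_ie a x q v hxa hq, cntLE_ie g x p v hxg hp]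
  have h1 := le_phi g a v
  by_cases hca : x < q
  · have hN : ((phi g a + (if x < q then 1 else 0) : ℕ) : ℤ) = phi g a + 1 := by
      simp [hca]
    rw [hN]
    by_cases hpv : p ≤ v <;> by_cases hqv : q ≤ v <;> simp [hpv, hqv] <;> omega
  · have hN : ((phi g a + (if x < q then 1 else 0) : ℕ) : ℤ) = phi g a := by
      simp [hca]
    rw [hN]
    have hqx : q < x := lt_of_le_of_ne (not_lt.1 hca) (fun h => hxa (h ▸ hq))
    by_cases hqp : q ≤ p
    · by_cases hpv : p ≤ v <;> by_cases hqv : q ≤ v <;> simp [hpv, hqv] <;>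
        first
          | omega
          | (exact absurd (le_trans hqp hpv) hqv)
    · have hpq : p < q := not_le.1 hqp
      by_cases hpv : p ≤ v
      · by_cases hqv : q ≤ v
        · simp [hpv, hqv]; omega
        · -- p ≤ v < q
          have hvq : v < q := not_le.1 hqv
          have h2 := le_phi g a q
          have hGq : cntLE g v = cntLE g q := by
            apply le_antisymm (cntLE_mono g (le_of_lt hvq))
            apply Finset.card_le_card
            intro t ht
            rw [Finset.mem_filter] at ht ⊢
            exact ⟨ht.1, le_trans (hmax t ht.1 (lt_of_le_of_lt ht.2 hqx)) hpv⟩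
          have hAq := cnt_insert_le a q v hq hqv
          simp [hpv, hqv]
          omega
      · have hqv : ¬ q ≤ v := fun h => hpv (le_trans (le_of_lt hpq) h)
        simp [hpv, hqv]; omega

lemma stepB (g a : Finset ℤ) (hgc : g.card = a.card)
    (x p q : ℤ) (hxg : x ∉ g) (hxa : x ∉ a)
    (hp : p ∈ g) (hq : q ∈ a) (hbelow : ∀ u ∈ g, x < u) (hpmax : ∀ u ∈ g, u ≤ p) :
    phi (insert x (g.erase p)) (insert x (a.erase q)) + 1
      ≤ phi g a + (if x < q then 1 else 0) := by
  have hxp : x < p := hbelow p hp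
  by_cases hca : x < q
  · rw [if_pos hca]
    have hle : phi (insert x (g.erase p)) (insert x (a.erase q)) ≤ phi g a := by
      apply phi_le
      intro v _
      rw [cntLE_ie a x q v hxa hq, cntLE_ie g x p v hxg hp]
      have h1 := le_phi g a v
      by_cases hpv : p ≤ v <;> by_cases hqv : q ≤ v <;> simp [hpv, hqv] <;>
        try omega
      -- p ≤ v < q : show D(v) ≤ -1
      have hGv : cntLE g v = g.card := by
        unfold cntLE
        rw [Finset.filter_eq_self.2 (fun u hu => le_trans (hpmax u hu) hpv)]
      have hAv : cntLE a v + 1 ≤ a.card :=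
        le_trans (cnt_insert_le a q v hq hqv) (cntLE_le_card a q)
      omega
    omega
  · rw [if_neg hca]
    have hqx : q < x := lt_of_le_of_ne (not_lt.1 hca) (fun h => hxa (h ▸ hq))
    have hqp : q < p := lt_trans hqx hxp
    have hGq : cntLE g q = 0 := by
      unfold cntLE
      rw [Finset.card_eq_zero, Finset.filter_eq_empty_iff]
      intro u hu
      exact not_le.2 (lt_trans hqx (hbelow u hu))
    have hAq : 1 ≤ cntLE a q :=
      Finset.card_pos.2 ⟨q, Finset.mem_filter.2 ⟨hq, le_refl _⟩⟩
    have hphi1 : 1 ≤ phi g a := by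
      have := le_phi g a q
      omega
    have hmain : phi (insert x (g.erase p)) (insert x (a.erase q)) ≤ phi g a - 1 := by
      apply phi_le
      intro v _
      rw [cntLE_ie a x q v hxa hq, cntLE_ie g x p v hxg hp]
      have h1 := le_phi g a v
      have h2 := le_phi g a q
      by_cases hpv : p ≤ v <;> by_cases hqv : q ≤ v
      · -- p ≤ v : D(v) ≤ 0
        have hGv : cntLE g v = g.card := by
          unfold cntLE
          rw [Finset.filter_eq_self.2 (fun u hu => le_trans (hpmax u hu) hpv)]
        have hAv : cntLE a v ≤ a.card := cntLE_le_card a v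
        simp [hpv, hqv]
        omega
      · exact absurd (le_trans (le_of_lt hqp) hpv) hqv
      · -- q ≤ v < p : D' = D - 1
        simp [hpv, hqv]
        omega
      · -- v < q : D(v) + 1 ≤ D(q)
        have hvq : v < q := not_le.1 hqv
        have hGv : cntLE g v = 0 := by
          unfold cntLE
          rw [Finset.card_eq_zero, Finset.filter_eq_empty_iff]
          intro u hu
          exact not_le.2 (lt_trans (lt_trans hvq hqx) (hbelow u hu))
        have hAv := cnt_insert_le a q v hq hqv
        simp [hpv, hqv]
        omega
    omega

lemma update_injective {n : ℕ} (t : Fin n → ℤ) (ht : Function.Injective t)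
    (i₀ : Fin n) (x : ℤ) (hx : ∀ i, x ≠ t i) :
    Function.Injective (Function.update t i₀ x) := by
  intro u v h
  by_cases hu : u = i₀ <;> by_cases hv : v = i₀
  · rw [hu, hv]
  · subst hu
    rw [Function.update_self, Function.update_of_ne hv] at h
    exact absurd h (hx v)
  · subst hv
    rw [Function.update_self, Function.update_of_ne hu] at h
    exact absurd h.symm (hx u)
  · rw [Function.update_of_ne hu, Function.update_of_ne hv] at h
    exact ht h

lemma image_update {n : ℕ} (f : Fin n → ℤ) (hf : Function.Injective f)
    (j : Fin n) (x : ℤ) :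
    Finset.image (Function.update f j x) Finset.univ
      = insert x ((Finset.image f Finset.univ).erase (f j)) := by
  ext y
  simp only [Finset.mem_image, Finset.mem_insert, Finset.mem_erase, Finset.mem_univ,
    true_and]
  constructor
  · rintro ⟨i, rfl⟩
    rcases eq_or_ne i j with rfl | hij
    · left; rw [Function.update_self]
    · right
      rw [Function.update_of_ne hij]
      exact ⟨fun h => hij (hf h), ⟨i, rfl⟩⟩
  · rintro (rfl | ⟨hy, i, rfl⟩)
    · exact ⟨j, Function.update_self _ _ _⟩
    · have hij : i ≠ j := fun h => hy (by rw [h])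
      exact ⟨i, Function.update_of_ne hij _ _⟩

lemma kinterleave_mem {n : ℕ} {qs : Fin n → List ℤ} {C : List ℤ}
    (h : KInterleave qs C) : ∀ i, ∀ y ∈ qs i, y ∈ C := by
  induction h with
  | nil => intro i y hy; simp at hy
  | cons i x h ih =>
    intro i' y hy
    rcases eq_or_ne i' i with rfl | hne
    · rw [Function.update_self] at hy
      rcases List.mem_cons.1 hy with rfl | hy
      · exact List.mem_cons_self
      · exact List.mem_cons_of_mem _ (ih _ _ hy)
    · rw [Function.update_of_ne hne] at hy
      exact List.mem_cons_of_mem _ (ih _ _ hy)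

lemma downSteps_cons_cons' (u v : ℤ) (l : List ℤ) :
    downSteps (u :: v :: l) = (if v < u then 1 else 0) + downSteps (v :: l) := by
  simp [downSteps, List.countP_cons]
  split <;> omega

lemma sum_split {m : ℕ} (t : Fin (m + 1) → ℤ) (qs : Fin (m + 1) → List ℤ)
    (i₀ : Fin (m + 1)) (x : ℤ) :
    ∑ i, downSteps (t i :: (Function.update qs i₀ (x :: qs i₀)) i)
      = (if x < t i₀ then 1 else 0)
        + ∑ i, downSteps ((Function.update t i₀ x) i :: qs i) := by
  have h1 : ∀ (f : Fin (m + 1) → ℕ),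
      ∑ i, f i = f i₀ + ∑ i ∈ Finset.univ.erase i₀, f i :=
    fun f => (Finset.add_sum_erase _ f (Finset.mem_univ i₀)).symm
  rw [h1, h1]
  have hcongr : ∑ i ∈ Finset.univ.erase i₀,
        downSteps (t i :: (Function.update qs i₀ (x :: qs i₀)) i)
      = ∑ i ∈ Finset.univ.erase i₀,
        downSteps ((Function.update t i₀ x) i :: qs i) := by
    apply Finset.sum_congr rfl
    intro i hi
    have hne : i ≠ i₀ := (Finset.mem_erase.1 hi).1
    rw [Function.update_of_ne hne, Function.update_of_ne hne]
  rw [hcongr, Function.update_self, Function.update_self,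
    downSteps_cons_cons']
  omega

lemma algDS_cons (k : ℕ) (e : ℤ) (rest : List ℤ) (ℓ : Fin (k + 1) → ℤ) (b : Fin (k + 1)) :
    algDS k (e :: rest) ℓ b =
      if h : (Finset.univ.filter (fun i : Fin (k + 1) => e > ℓ (b + i))).Nonempty then
        algDS k rest
          (Function.update ℓ
            (b + (Finset.univ.filter (fun i : Fin (k + 1) => e > ℓ (b + i))).min' h) e) b
      else 1 + algDS k rest (Function.update ℓ b e) (b + 1) := rfl

example (m : ℕ) (b u : Fin (m+1)) : b + (u - b) = u := by exact add_sub_cancel b u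

lemma main_aux (m : ℕ) (C : List ℤ) :
    ∀ (qs : Fin (m + 1) → List ℤ), KInterleave qs C →
    ∀ (ℓ t : Fin (m + 1) → ℤ) (b : Fin (m + 1)),
      C.Nodup →
      (∀ x ∈ C, ∀ i, x ≠ ℓ i ∧ x ≠ t i) →
      (∀ i j : Fin (m + 1), (i : ℕ) < (j : ℕ) → ℓ (b + j) < ℓ (b + i)) →
      Function.Injective t →
      algDS m C ℓ b ≤ (∑ i, downSteps (t i :: qs i))
        + phi (Finset.image ℓ Finset.univ) (Finset.image t Finset.univ) := by
  induction C with
  | nil =>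
    intro qs _ ℓ t b _ _ _ _
    show algDS m [] ℓ b ≤ _
    simp [algDS]
  | cons x C ih =>
    intro qs henq ℓ t b hnd hfresh hdec htinj
    have hbc : ∀ u : Fin (m + 1), b + (u - b) = u := fun u => by exact add_sub_cancel b u
    -- ℓ is injective
    have hlinj : Function.Injective ℓ := by
      intro u v huv
      by_contra hne
      have hvne : ((u - b : Fin (m+1)) : ℕ) ≠ ((v - b : Fin (m+1)) : ℕ) := by
        intro h
        exact hne (by rw [← hbc u, ← hbc v, Fin.val_inj.1 h])
      rcases Nat.lt_or_ge ((u - b : Fin (m+1)) : ℕ) ((v - b : Fin (m+1)) : ℕ) with h | h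
      · have := hdec _ _ h
        rw [hbc u, hbc v] at this
        exact absurd huv (ne_of_gt this)
      · have hlt : ((v - b : Fin (m+1)) : ℕ) < ((u - b : Fin (m+1)) : ℕ) :=
          lt_of_le_of_ne h (Ne.symm hvne)
        have := hdec _ _ hlt
        rw [hbc u, hbc v] at this
        exact absurd huv (ne_of_lt this)
    set g := Finset.image ℓ Finset.univ with hg
    set a := Finset.image t Finset.univ with ha
    have hxg : x ∉ g := by
      rw [hg]
      simp only [Finset.mem_image, Finset.mem_univ, true_and, not_exists]
      intro i hi
      exact (hfresh x (List.mem_cons_self) i).1 hi.symm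
    have hxa : x ∉ a := by
      rw [ha]
      simp only [Finset.mem_image, Finset.mem_univ, true_and, not_exists]
      intro i hi
      exact (hfresh x (List.mem_cons_self) i).2 hi.symm
    have hgc : g.card = m + 1 := by
      rw [hg, Finset.card_image_of_injective _ hlinj, Finset.card_univ, Fintype.card_fin]
    have hac : a.card = m + 1 := by
      rw [ha, Finset.card_image_of_injective _ htinj, Finset.card_univ, Fintype.card_fin]
    -- invert henq
    cases henq with
    | cons i₀ =>
      rename_i qs0 h'
      have hndC : C.Nodup := (List.nodup_cons.1 hnd).2
      have hxC : x ∉ C := (List.nodup_cons.1 hnd).1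
      set t' := Function.update t i₀ x with ht'
      have htinj' : Function.Injective t' :=
        update_injective t htinj i₀ x (fun i => (hfresh x (List.mem_cons_self) i).2)
      have ha' : Finset.image t' Finset.univ = insert x (a.erase (t i₀)) := by
        rw [ht', ha]; exact image_update t htinj i₀ x
      have hqa : t i₀ ∈ a := by
        rw [ha]; exact Finset.mem_image_of_mem t (Finset.mem_univ i₀)
      have hsum := sum_split t qs0 i₀ x
      rw [← ht'] at hsum
      set S := Finset.univ.filter (fun i : Fin (m + 1) => x > ℓ (b + i)) with hSdef
      rw [algDS_cons]
      by_cases hS : S.Nonempty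
      · rw [dif_pos hS]
        set j := S.min' hS with hj
        set p := ℓ (b + j) with hp
        have hjS : j ∈ S := S.min'_mem hS
        have hpx : p < x := by
          have := Finset.mem_filter.1 hjS
          exact this.2
        have hpg : p ∈ g := by
          rw [hg]; exact Finset.mem_image_of_mem ℓ (Finset.mem_univ (b + j))
        have hmax : ∀ u ∈ g, u < x → u ≤ p := by
          intro u hu hux
          rw [hg] at hu
          obtain ⟨w, _, rfl⟩ := Finset.mem_image.1 hu
          have hw : b + (w - b) = w := hbc w
          have hwS : (w - b) ∈ S := by
            rw [hSdef, Finset.mem_filter]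
            exact ⟨Finset.mem_univ _, by rw [hw]; exact hux⟩
          have hjle : j ≤ w - b := S.min'_le _ hwS
          rcases eq_or_lt_of_le hjle with heq | hlt
          · rw [← hw, ← heq]
          · have := hdec j (w - b) hlt
            rw [hw] at this
            exact le_of_lt this
        set ℓ' := Function.update ℓ (b + j) x with hℓ'
        have hg' : Finset.image ℓ' Finset.univ = insert x (g.erase p) := by
          rw [hℓ', hg, hp]; exact image_update ℓ hlinj (b + j) x
        have hfresh' : ∀ y ∈ C, ∀ i, y ≠ ℓ' i ∧ y ≠ t' i := by
          intro y hy i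
          have hyx : y ≠ x := fun h => hxC (h ▸ hy)
          have hyf := hfresh y (List.mem_cons_of_mem x hy) i
          constructor
          · rw [hℓ', Function.update_apply]
            split
            · exact hyx
            · exact hyf.1
          · rw [ht', Function.update_apply]
            split
            · exact hyx
            · exact hyf.2
        have hdec' : ∀ i1 j1 : Fin (m+1), (i1 : ℕ) < (j1 : ℕ) → ℓ' (b + j1) < ℓ' (b + i1) := by
          intro i1 j1 h11
          by_cases hi : i1 = j <;> by_cases hj2 : j1 = j
          · subst hi; subst hj2; omega
          · subst hi
            have hne : b + j1 ≠ b + j := fun h => hj2 (add_left_cancel h)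
            rw [hℓ', Function.update_self, Function.update_of_ne hne]
            calc ℓ (b + j1) < ℓ (b + j) := hdec j j1 h11
              _ < x := hpx
          · subst hj2
            have hne : b + i1 ≠ b + j := fun h => hi (add_left_cancel h)
            rw [hℓ', Function.update_self, Function.update_of_ne hne]
            have hi1S : i1 ∉ S := by
              intro hmem
              have := S.min'_le _ hmem
              rw [← hj] at this
              have : (j : ℕ) ≤ (i1 : ℕ) := this
              omega
            rw [hSdef, Finset.mem_filter] at hi1S
            push_neg at hi1S
            have hle := hi1S (Finset.mem_univ i1)
            have hne2 : x ≠ ℓ (b + i1) := (hfresh x (List.mem_cons_self) (b + i1)).1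
            omega
          · have hne1 : b + i1 ≠ b + j := fun h => hi (add_left_cancel h)
            have hne2 : b + j1 ≠ b + j := fun h => hj2 (add_left_cancel h)
            rw [hℓ', Function.update_of_ne hne1, Function.update_of_ne hne2]
            exact hdec i1 j1 h11
        have hIH := ih qs0 h' ℓ' t' b hndC hfresh' hdec' htinj'
        rw [hg', ha'] at hIH
        have hstep := stepA g a x p (t i₀) hxg hxa hpg hqa hpx hmax
        rw [hsum]
        omega
      · rw [dif_neg hS]
        have hSe : ∀ i : Fin (m + 1), x < ℓ (b + i) := by
          intro i
          have : i ∉ S := fun h => hS ⟨i, h⟩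
          rw [hSdef, Finset.mem_filter] at this
          push_neg at this
          have hle := this (Finset.mem_univ i)
          have hne2 : x ≠ ℓ (b + i) := (hfresh x (List.mem_cons_self) (b + i)).1
          omega
        have hbelow : ∀ u ∈ g, x < u := by
          intro u hu
          rw [hg] at hu
          obtain ⟨w, _, rfl⟩ := Finset.mem_image.1 hu
          have := hSe (w - b)
          rwa [hbc w] at this
        set p := ℓ b with hp
        have hpg : p ∈ g := by
          rw [hg]; exact Finset.mem_image_of_mem ℓ (Finset.mem_univ b)
        have hpmax : ∀ u ∈ g, u ≤ p := by
          intro u hu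
          rw [hg] at hu
          obtain ⟨w, _, rfl⟩ := Finset.mem_image.1 hu
          rcases eq_or_ne w b with rfl | hne
          · exact le_refl _
          · have hne0 : ((w - b : Fin (m+1)) : ℕ) ≠ 0 := by
              intro h0
              apply hne
              have hz : (w - b : Fin (m+1)) = 0 := by
                rw [Fin.ext_iff, h0, Fin.val_zero]
              rw [← hbc w, hz, add_zero]
            have := hdec 0 (w - b)
              (by rw [Fin.val_zero]; exact Nat.pos_of_ne_zero hne0)
            rw [hbc w, add_zero] at this
            exact le_of_lt this
        set ℓ' := Function.update ℓ b x with hℓ'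
        have hg' : Finset.image ℓ' Finset.univ = insert x (g.erase p) := by
          rw [hℓ', hg, hp]; exact image_update ℓ hlinj b x
        have hfresh' : ∀ y ∈ C, ∀ i, y ≠ ℓ' i ∧ y ≠ t' i := by
          intro y hy i
          have hyx : y ≠ x := fun h => hxC (h ▸ hy)
          have hyf := hfresh y (List.mem_cons_of_mem x hy) i
          constructor
          · rw [hℓ', Function.update_apply]
            split
            · exact hyx
            · exact hyf.1
          · rw [ht', Function.update_apply]
            split
            · exact hyx
            · exact hyf.2
        have hdec' : ∀ i1 j1 : Fin (m+1), (i1 : ℕ) < (j1 : ℕ) →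
            ℓ' (b + 1 + j1) < ℓ' (b + 1 + i1) := by
          intro i1 j1 h11
          have him := i1.isLt
          have hjm := j1.isLt
          have hm1 : 1 ≤ m := by omega
          have hval1 : ((1 : Fin (m+1)) : ℕ) = 1 := by
            rw [Fin.val_one']
            exact Nat.mod_eq_of_lt (by omega)
          have hvadd : ∀ u : Fin (m+1), ((1 + u : Fin (m+1)) : ℕ) = (1 + (u:ℕ)) % (m+1) := by
            intro u
            rw [Fin.val_add, hval1]
          have h1i : ((1 + i1 : Fin (m+1)) : ℕ) = 1 + (i1 : ℕ) := by
            rw [hvadd]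
            exact Nat.mod_eq_of_lt (by omega)
          have h1ine : b + 1 + i1 ≠ b := by
            rw [add_assoc]
            intro h
            have h0 : (1 + i1 : Fin (m+1)) = 0 :=
              add_left_cancel (a := b) (by rw [add_zero]; exact h)
            have hv := congrArg Fin.val h0
            rw [h1i, Fin.val_zero] at hv
            omega
          by_cases hj1 : (j1 : ℕ) = m
          · have hz : (1 + j1 : Fin (m+1)) = 0 := by
              rw [Fin.ext_iff, hvadd, hj1, Fin.val_zero, Nat.add_comm]
              exact Nat.mod_self _
            have h1j : b + 1 + j1 = b := by
              rw [add_assoc, hz, add_zero]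
            rw [h1j, hℓ', Function.update_self, Function.update_of_ne h1ine]
            have := hSe (1 + i1)
            rwa [← add_assoc] at this
          · have h1j : ((1 + j1 : Fin (m+1)) : ℕ) = 1 + (j1 : ℕ) := by
              rw [hvadd]
              exact Nat.mod_eq_of_lt (by omega)
            have h1jne : b + 1 + j1 ≠ b := by
              rw [add_assoc]
              intro h
              have h0 : (1 + j1 : Fin (m+1)) = 0 :=
                add_left_cancel (a := b) (by rw [add_zero]; exact h)
              have hv := congrArg Fin.val h0
              rw [h1j, Fin.val_zero] at hv
              omega
            rw [hℓ', Function.update_of_ne h1ine, Function.update_of_ne h1jne,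
              add_assoc, add_assoc]
            apply hdec
            rw [h1i, h1j]
            omega
        have hIH := ih qs0 h' ℓ' t' (b + 1) hndC hfresh' hdec' htinj'
        rw [hg', ha'] at hIH
        have hstep := stepB g a (by rw [hgc, hac]) x p (t i₀) hxg hxa hpg hqa hbelow hpmax
        rw [hsum]
        omega

/-- for any list of distinct non-negative integers, the total number
of down-steps of any partition of it into `k+1` queues (subsequences) is at least
the number of down-steps incurred by `Alg_DS` (started with fictitious last
elements `-(i+1)` and base queue `0`). -/
theorem algDS_optimal (k : ℕ) (A : List ℤ) (hnd : A.Nodup)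
    (hpos : ∀ x ∈ A, 0 ≤ x)
    (qs : Fin (k + 1) → List ℤ) (henq : KInterleave qs A) :
    algDS k A (fun i => -(i : ℤ) - 1) 0 ≤ ∑ i : Fin (k + 1), downSteps (qs i) := by
  set ℓ0 : Fin (k + 1) → ℤ := fun i => -(i : ℤ) - 1 with hℓ0
  have hneg : ∀ i : Fin (k + 1), ℓ0 i < 0 := by
    intro i
    show -(i : ℤ) - 1 < 0
    have : (0 : ℤ) ≤ (i : ℤ) := Int.natCast_nonneg _
    omega
  have hfresh : ∀ x ∈ A, ∀ i, x ≠ ℓ0 i ∧ x ≠ ℓ0 i := by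
    intro x hx i
    have h1 := hpos x hx
    have h2 := hneg i
    constructor <;> omega
  have hdec : ∀ i j : Fin (k + 1), (i : ℕ) < (j : ℕ) → ℓ0 (0 + j) < ℓ0 (0 + i) := by
    intro i j hij
    rw [zero_add, zero_add]
    show -(j : ℤ) - 1 < -(i : ℤ) - 1
    have hi : ((i : ℕ) : ℤ) < ((j : ℕ) : ℤ) := by exact_mod_cast hij
    omega
  have hinj : Function.Injective ℓ0 := by
    intro i j h
    have h' : -(i : ℤ) - 1 = -(j : ℤ) - 1 := h
    have : ((i : ℕ) : ℤ) = ((j : ℕ) : ℤ) := by omega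
    exact Fin.ext (by exact_mod_cast this)
  have hmain := main_aux k A qs henq ℓ0 ℓ0 0 hnd hfresh hdec hinj
  rw [phi_self] at hmain
  have hsum : ∑ i, downSteps (ℓ0 i :: qs i) = ∑ i : Fin (k + 1), downSteps (qs i) := by
    apply Finset.sum_congr rfl
    intro i _
    cases hqs : qs i with
    | nil => rw [downSteps_single, downSteps_nil]
    | cons y l =>
      rw [downSteps_cons_cons']
      have hy : y ∈ A := kinterleave_mem henq i y (by rw [hqs]; exact List.mem_cons_self)
      have h1 := hpos y hy
      have h2 := hneg i
      rw [if_neg (by omega), zero_add]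
  rw [hsum] at hmain
  omega
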